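/- Let ν ∈ ℝ³ be a unit vector and let b be a 2×2 complex matrix satisfying b* (σ·ν) + (σ·ν) b = 0, where b* denotes the conjugate transpose. If u = (u¹,u²) and v = (v¹,v²) in ℂ⁴ satisfy u¹ + b u² = 0 and v¹ + b v² = 0, then ⟨(α·ν) u, v⟩ = 0, where ⟨·,·⟩ is the standard Hermitian inner product on ℂ⁴. -/

import Mathlib

open Matrix Complex

/-- The Pauli matrix σ₁. -/
noncomputable def σ1 : Matrix (Fin 2) (Fin 2) ℂ := !![0, 1; 1, 0]
/-- The Pauli matrix σ₂. -/
noncomputable def σ2 : Matrix (Fin 2) (Fin 2) ℂ := !![0, -Complex.I; Complex.I, 0]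
/-- The Pauli matrix σ₃. -/
noncomputable def σ3 : Matrix (Fin 2) (Fin 2) ℂ := !![1, 0; 0, -1]

/-- The Dirac matrix α₀ = [[I₂,0],[0,-I₂]]. -/
noncomputable def α0 : Matrix (Fin 4) (Fin 4) ℂ :=
  !![1, 0, 0, 0; 0, 1, 0, 0; 0, 0, -1, 0; 0, 0, 0, -1]
/-- The Dirac matrix α₁ = [[0,σ₁],[σ₁,0]]. -/
noncomputable def α1 : Matrix (Fin 4) (Fin 4) ℂ :=
  !![0, 0, 0, 1; 0, 0, 1, 0; 0, 1, 0, 0; 1, 0, 0, 0]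
/-- The Dirac matrix α₂ = [[0,σ₂],[σ₂,0]]. -/
noncomputable def α2 : Matrix (Fin 4) (Fin 4) ℂ :=
  !![0, 0, 0, -Complex.I; 0, 0, Complex.I, 0;
     0, -Complex.I, 0, 0; Complex.I, 0, 0, 0]
/-- The Dirac matrix α₃ = [[0,σ₃],[σ₃,0]]. -/
noncomputable def α3 : Matrix (Fin 4) (Fin 4) ℂ :=
  !![0, 0, 1, 0; 0, 0, 0, -1; 1, 0, 0, 0; 0, -1, 0, 0]

/-- Let ν ∈ ℝ³ be a unit vector and b a 2×2 complex matrix with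
b* (σ·ν) + (σ·ν) b = 0.  If u = (u¹,u²) and v = (v¹,v²) in ℂ⁴ satisfy
u¹ + b u² = 0 and v¹ + b v² = 0, then ⟨(α·ν) u, v⟩ = 0 for the standard
Hermitian inner product on ℂ⁴. -/
theorem boundary_symmetry_inner_product (ν1 ν2 ν3 : ℝ)
    (hν : ν1 ^ 2 + ν2 ^ 2 + ν3 ^ 2 = 1) (b : Matrix (Fin 2) (Fin 2) ℂ)
    (hb : bᴴ * ((ν1 : ℂ) • σ1 + (ν2 : ℂ) • σ2 + (ν3 : ℂ) • σ3) +
        ((ν1 : ℂ) • σ1 + (ν2 : ℂ) • σ2 + (ν3 : ℂ) • σ3) * b = 0)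
    (u1 u2 v1 v2 : Fin 2 → ℂ)
    (hu : u1 + b.mulVec u2 = 0) (hv : v1 + b.mulVec v2 = 0) :
    (star ![v1 0, v1 1, v2 0, v2 1]) ⬝ᵥ
      (((ν1 : ℂ) • α1 + (ν2 : ℂ) • α2 + (ν3 : ℂ) • α3).mulVec
        ![u1 0, u1 1, u2 0, u2 1]) = 0 := by

  have hu' : u1 = -(b.mulVec u2) := by
    have := hu; rw [add_eq_zero_iff_eq_neg] at this; exact this
  have hv' : v1 = -(b.mulVec v2) := by
    have := hv; rw [add_eq_zero_iff_eq_neg] at this; exact this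
  have hb00 := congr_fun (congr_fun hb 0) 0
  have hb01 := congr_fun (congr_fun hb 0) 1
  have hb10 := congr_fun (congr_fun hb 1) 0
  have hb11 := congr_fun (congr_fun hb 1) 1
  subst hu' hv'
  norm_num [σ1, σ2, σ3, Matrix.mul_apply, Matrix.conjTranspose_apply,
    Matrix.vecMul, Matrix.vecHead, Matrix.vecTail, dotProduct, Fin.sum_univ_two] at hb00 hb01 hb10 hb11
  norm_num [α1, α2, α3, Matrix.mulVec, dotProduct, Fin.sum_univ_four,
    Matrix.vecHead, Matrix.vecTail, Fin.sum_univ_two, Matrix.cons_val_zero, Matrix.cons_val_one, Matrix.cons_val_two, Matrix.cons_val_three, Matrix.head_cons, Matrix.tail_cons]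
  linear_combination (-(starRingEnd ℂ (v2 0)) * u2 0) * hb00
    + (-(starRingEnd ℂ (v2 0)) * u2 1) * hb01
    + (-(starRingEnd ℂ (v2 1)) * u2 0) * hb10
    + (-(starRingEnd ℂ (v2 1)) * u2 1) * hb11
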